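/- Let d ≥ 1 and let b ≥ 2d² be a prime. There exists a constant c > 0 (depending only on b and d) such that for every w ∈ ℕ, with n = 2dw and CS_n the Chen–Skriganov point set of N = b^n points, and for every j ∈ ℕ_{−1}^d with j ≠ (−1,…,−1) such that j_i ≥ n for at least one i with j_i ≠ −1, every m ∈ D_j and every l ∈ B_j: |μ_{jml}(D_{CS_n})| ≤ c·b^{−2|j|}, where |j| = Σ_{i=1}^d max(j_i,0). -/

import Mathlib

open MeasureTheory


/-- `e^{2πi x / b}`. -/
noncomputable def eb (b : ℕ) (x : ℝ) : ℂ :=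
  Complex.exp (2 * (Real.pi : ℂ) * Complex.I * (x : ℂ) / (b : ℂ))

/-- The one-dimensional `b`-adic Haar function `h_{jml}` for `j ∈ ℕ₀`:
it vanishes outside `I_{jm} = [b^{-j}m, b^{-j}(m+1))` and equals `e^{2πilk/b}` on
`I_{jm}^k = [b^{-j-1}(bm+k), b^{-j-1}(bm+k+1))`, `k = 0,…,b-1`. -/
noncomputable def haarFn (b j m l : ℕ) (x : ℝ) : ℂ :=
  if (m : ℝ) / (b : ℝ) ^ j ≤ x ∧ x < ((m : ℝ) + 1) / (b : ℝ) ^ j then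
    eb b (l * ((⌊(b : ℝ) ^ (j + 1) * x⌋).toNat - b * m))
  else 0

/-- The one-dimensional `b`-adic Haar function with index `j ∈ ℕ_{-1} = {-1,0,1,…}`;
for `j = -1` it is the indicator of `[0,1)`. -/
noncomputable def haarFnZ (b : ℕ) (j : ℤ) (m l : ℕ) (x : ℝ) : ℂ :=
  if j = -1 then (if 0 ≤ x ∧ x < 1 then 1 else 0)
  else haarFn b j.toNat m l x

/-- The `b`-adic Haar coefficient `μ_{jml}(f) = ∫_{[0,1)^d} f(x) h_{jml}(x) dx`
of a function `f : [0,1)^d → ℂ`, where `h_{jml}(x) = ∏ i, h_{j_i m_i l_i}(x_i)`. -/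
noncomputable def haarCoeff (b d : ℕ) (j : Fin d → ℤ) (m l : Fin d → ℕ)
    (f : (Fin d → ℝ) → ℂ) : ℂ :=
  ∫ x in Set.univ.pi (fun _ : Fin d => Set.Ico (0 : ℝ) 1),
    f x * ∏ i, haarFnZ b (j i) (m i) (l i) (x i)

/-- The map `Φ_n : 𝔽_b^n → [0,1)`, `Φ_n(a) = a_1 b^{-1} + … + a_n b^{-n}`
(digits identified with `{0,…,b−1}`). -/
noncomputable def PhiMap (b : ℕ) {n : ℕ} (a : Fin n → ZMod b) : ℝ :=
  ∑ k : Fin n, ((a k).val : ℝ) / (b : ℝ) ^ ((k : ℕ) + 1)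

/-- The Chen–Skriganov code `𝒞_n ⊆ 𝔽_b^{dn}`, `n = 2dw`: the codeword associated with a
polynomial `f ∈ 𝔽_b[z]`, `deg f < n`, has `i`-th block
`a_i(f) = ((∂^{λ−1} f(β_{i,ν}))_{λ=1}^w)_{ν=1}^{2d}` (Hasse derivatives), i.e. the entry
with (0-based) index `k` of `a_i(f)` is `(∂^{k mod w} f)(β_{i, k / w})`. -/
def csCode (b d w : ℕ) (β : Fin d → ℕ → ZMod b) :
    Set (Fin d → Fin (2 * d * w) → ZMod b) :=
  {A | ∃ f : Polynomial (ZMod b), f.degree < ((2 * d * w : ℕ) : WithBot ℕ) ∧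
    ∀ (i : Fin d) (k : Fin (2 * d * w)),
      A i k = Polynomial.eval (β i ((k : ℕ) / w)) (Polynomial.hasseDeriv ((k : ℕ) % w) f)}

/-- The discrepancy function of the Chen–Skriganov point set
`CS_n = Φ_n^d(𝒞_n) ⊆ [0,1)^d` of `N = b^n` points, `n = 2dw`:
`D(x) = (1/N) #{z ∈ CS_n : z ∈ [0,x)} − x_1⋯x_d`. -/
noncomputable def csDisc (b d w : ℕ) (β : Fin d → ℕ → ZMod b) (x : Fin d → ℝ) : ℝ :=
  (Nat.card {A : Fin d → Fin (2 * d * w) → ZMod b //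
      A ∈ csCode b d w β ∧ ∀ i, PhiMap b (A i) ∈ Set.Ico (0 : ℝ) (x i)} : ℝ) /
    (b : ℝ) ^ (2 * d * w) - ∏ i, x i

lemma measurable_haarFn (b j m l : ℕ) : Measurable (haarFn b j m l) := by
  unfold haarFn
  apply Measurable.ite
  · exact (measurableSet_Ico (a := (m:ℝ)/(b:ℝ)^j) (b := ((m:ℝ)+1)/(b:ℝ)^j))
  · unfold eb
    apply Complex.measurable_exp.comp
    apply Measurable.div_const
    apply Measurable.const_mul
    apply Complex.measurable_ofReal.comp
    apply Measurable.const_mul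
    apply Measurable.sub _ measurable_const
    apply Measurable.comp (measurable_from_top (f := fun z : ℕ => (z:ℝ)))
    apply Measurable.comp (measurable_from_top (f := Int.toNat))
    exact Int.measurable_floor.comp (measurable_const_mul _)
  · exact measurable_const

lemma haarFn_eq_sum (b j m l : ℕ) (hb : 0 < b) (x : ℝ) :
    haarFn b j m l x = ∑ k ∈ Finset.range b,
      if ((b*m+k : ℕ) : ℝ) / (b : ℝ) ^ (j+1) ≤ x ∧ x < ((b*m+k+1 : ℕ) : ℝ) / (b : ℝ) ^ (j+1) then
        eb b (l * k) else 0 := by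
  have hbR : (0:ℝ) < (b:ℝ) ^ (j+1) := by positivity
  have hbj : (0:ℝ) < (b:ℝ)^j := by positivity
  have hpow : (b:ℝ)^(j+1) = (b:ℝ)^j * b := pow_succ _ _
  by_cases hx : (m : ℝ) / (b : ℝ) ^ j ≤ x ∧ x < ((m : ℝ) + 1) / (b : ℝ) ^ j
  · have h1 : ((b*m : ℕ) : ℝ) ≤ (b:ℝ)^(j+1) * x := by
      rw [div_le_iff₀ hbj] at hx
      push_cast
      calc (b:ℝ) * m ≤ (x * (b:ℝ)^j) * b := by
            have := hx.1
            have hb1 : (1:ℝ) ≤ b := by exact_mod_cast hb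
            nlinarith
        _ = (b:ℝ)^(j+1) * x := by rw [hpow]; ring
    have h2 : (b:ℝ)^(j+1) * x < ((b*m+b : ℕ) : ℝ) := by
      have := hx.2
      rw [lt_div_iff₀ hbj] at this
      push_cast
      calc (b:ℝ)^(j+1) * x = (x * (b:ℝ)^j) * b := by rw [hpow]; ring
        _ < (((m:ℝ)+1) * b) := by
            have hb0 : (0:ℝ) < b := by exact_mod_cast hb
            have := this
            nlinarith
        _ = (b:ℝ)*m + b := by ring
    set K : ℤ := ⌊(b:ℝ)^(j+1) * x⌋ with hK
    have hKl : ((b*m : ℕ) : ℤ) ≤ K := Int.le_floor.2 (by exact_mod_cast h1)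
    have hKu : K < ((b*m+b : ℕ) : ℤ) := Int.floor_lt.2 (by exact_mod_cast h2)
    have hK0 : (0:ℤ) ≤ K := le_trans (by positivity) hKl
    set k0 : ℕ := K.toNat - b*m with hk0
    have hKnat : K = ((b*m + k0 : ℕ) : ℤ) := by omega
    have hk0b : k0 < b := by omega
    rw [Finset.sum_eq_single k0]
    · rw [haarFn, if_pos hx, if_pos]
      · congr 2
        have : (⌊(b:ℝ)^(j+1) * x⌋).toNat = b*m + k0 := by omega
        rw [this]
        push_cast
        ring
      · have hfl := Int.floor_le ((b:ℝ)^(j+1) * x)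
        have hfu := Int.lt_floor_add_one ((b:ℝ)^(j+1) * x)
        rw [← hK, hKnat] at hfl hfu
        push_cast at hfl hfu
        constructor
        · rw [div_le_iff₀ hbR]; push_cast; linarith
        · rw [lt_div_iff₀ hbR]; push_cast; linarith
    · intro k hk hne
      rw [if_neg]
      intro hc
      apply hne
      have hl : ((b*m+k:ℕ):ℝ) ≤ (b:ℝ)^(j+1)*x := by
        rw [div_le_iff₀ hbR] at hc
        linarith [hc.1]
      have hu : (b:ℝ)^(j+1)*x < ((b*m+k+1:ℕ):ℝ) := by
        have := (lt_div_iff₀ hbR).1 hc.2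
        linarith
      have hKeq : K = ((b*m+k:ℕ):ℤ) := by
        rw [hK, Int.floor_eq_iff]
        constructor
        · exact_mod_cast hl
        · push_cast at hu ⊢; linarith
      omega
    · intro h; exact absurd (Finset.mem_range.2 hk0b) h
  · rw [haarFn, if_neg hx]
    symm
    apply Finset.sum_eq_zero
    intro k hk
    rw [if_neg]
    intro hc
    apply hx
    have hkb : k < b := Finset.mem_range.1 hk
    constructor
    · calc (m:ℝ)/(b:ℝ)^j = ((b*m:ℕ):ℝ)/(b:ℝ)^(j+1) := by
            push_cast; rw [hpow]; field_simp
        _ ≤ ((b*m+k:ℕ):ℝ)/(b:ℝ)^(j+1) := by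
            gcongr
            exact_mod_cast Nat.le_add_right _ _
        _ ≤ x := hc.1
    · calc x < ((b*m+k+1:ℕ):ℝ)/(b:ℝ)^(j+1) := hc.2
        _ ≤ ((b*m+b:ℕ):ℝ)/(b:ℝ)^(j+1) := by
            have h : ((b*m+k+1:ℕ):ℝ) ≤ ((b*m+b:ℕ):ℝ) :=
              Nat.cast_le.2 (Nat.add_lt_add_left hkb (b*m))
            exact div_le_div_of_nonneg_right h hbR.le
        _ = ((m:ℝ)+1)/(b:ℝ)^j := by
            push_cast; rw [hpow]; field_simp

lemma abs_eb (b : ℕ) (hb : 0 < b) (x : ℝ) : ‖eb b x‖ = 1 := by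
  have hbne : ((b:ℂ)) ≠ 0 := by exact_mod_cast Nat.cast_ne_zero.2 hb.ne'
  have : eb b x = Complex.exp (((2 * Real.pi * x / b : ℝ) : ℂ) * Complex.I) := by
    unfold eb
    congr 1
    push_cast
    field_simp
  rw [this, Complex.norm_exp_ofReal_mul_I]

lemma eb_mul_nat (b l k : ℕ) : eb b (l * k) = (eb b l) ^ k := by
  unfold eb
  rw [← Complex.exp_nat_mul]
  congr 1
  push_cast
  ring

lemma sum_eb_eq_zero (b l : ℕ) (hb : 1 ≤ l) (hlb : l < b) :
    ∑ k ∈ Finset.range b, eb b (l * k) = 0 := by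
  have hb0 : 0 < b := lt_of_le_of_lt (Nat.zero_le _) hlb
  have hbne : ((b:ℂ)) ≠ 0 := by exact_mod_cast hb0.ne'
  simp_rw [eb_mul_nat]
  set ζ := eb b l with hζ
  have hζb : ζ ^ b = 1 := by
    rw [hζ]
    unfold eb
    rw [← Complex.exp_nat_mul]
    have h3 : (b:ℂ) * (2 * (Real.pi:ℂ) * Complex.I * (((l:ℝ)):ℂ) / (b:ℂ))
        = (l:ℤ) * (2 * (Real.pi:ℂ) * Complex.I) := by
      push_cast
      field_simp
    rw [h3, Complex.exp_int_mul_two_pi_mul_I]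
  have hζ1 : ζ ≠ 1 := by
    rw [hζ]
    unfold eb
    intro h
    rw [Complex.exp_eq_one_iff] at h
    obtain ⟨n, hn⟩ := h
    have h2 : (2 * (Real.pi:ℂ) * Complex.I) ≠ 0 := by
      simp [Real.pi_ne_zero, Complex.I_ne_zero]
    have hl : ((l:ℂ)) = (n:ℂ) * (b:ℂ) := by
      have : (2 * (Real.pi:ℂ) * Complex.I) * ((l:ℂ)) = (2 * (Real.pi:ℂ) * Complex.I) * ((n:ℂ) * (b:ℂ)) := by
        rw [div_eq_iff hbne] at hn
        push_cast at hn ⊢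
        linear_combination hn
      exact mul_left_cancel₀ h2 this
    have hl' : (l:ℤ) = n * b := by exact_mod_cast hl
    rcases le_or_gt n 0 with hn0 | hn0
    · have : (n:ℤ) * b ≤ 0 := mul_nonpos_of_nonpos_of_nonneg hn0 (by positivity)
      omega
    · have : (b:ℤ) ≤ n * b := le_mul_of_one_le_left (by positivity) hn0
      omega
  rw [geom_sum_eq hζ1, hζb]
  simp

lemma norm_haarFn_le (b j m l : ℕ) (hb : 0 < b) (x : ℝ) : ‖haarFn b j m l x‖ ≤ 1 := by
  unfold haarFn
  split
  · rw [abs_eb b hb]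
  · simp

lemma haarFn_eq_zero_of_notin (b j m l : ℕ) {x : ℝ}
    (hx : ¬ ((m : ℝ) / (b : ℝ) ^ j ≤ x ∧ x < ((m : ℝ) + 1) / (b : ℝ) ^ j)) :
    haarFn b j m l x = 0 := by
  rw [haarFn, if_neg hx]

lemma integrableOn_haarFn (b j m l : ℕ) (hb : 0 < b) :
    IntegrableOn (haarFn b j m l) (Set.Ico (0:ℝ) 1) := by
  apply Measure.integrableOn_of_bounded (M := 1)
  · rw [Real.volume_Ico]; exact ENNReal.ofReal_ne_top
  · exact (measurable_haarFn b j m l).aestronglyMeasurable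
  · exact Filter.Eventually.of_forall (norm_haarFn_le b j m l hb)

lemma subinterval_subset (b j m : ℕ) (hm : m < b ^ j) (hb : 0 < b) (k : ℕ) (hk : k < b) :
    Set.Ico (((b*m+k : ℕ) : ℝ) / (b : ℝ) ^ (j+1)) (((b*m+k+1 : ℕ) : ℝ) / (b : ℝ) ^ (j+1))
      ⊆ Set.Ico (0:ℝ) 1 := by
  have hbR : (0:ℝ) < (b:ℝ) ^ (j+1) := by positivity
  intro t ht
  constructor
  · exact le_trans (by positivity) ht.1
  · apply lt_of_lt_of_le ht.2
    rw [div_le_one hbR]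
    have : (b*m+k+1 : ℕ) ≤ b ^ (j+1) := by
      have : m + 1 ≤ b ^ j := hm
      calc b*m+k+1 ≤ b*m + b := by omega
        _ = b * (m+1) := by ring
        _ ≤ b * b ^ j := by exact Nat.mul_le_mul_left b hm
        _ = b ^ (j+1) := by rw [pow_succ]; ring
    exact_mod_cast this

lemma setIntegral_haarFn (b j m l : ℕ) (hm : m < b ^ j) (hl : 1 ≤ l) (hlb : l < b) :
    ∫ t in Set.Ico (0:ℝ) 1, haarFn b j m l t = 0 := by
  have hb : 0 < b := lt_of_le_of_lt (Nat.zero_le _) hlb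
  have hbR : (0:ℝ) < (b:ℝ) ^ (j+1) := by positivity
  have heq : (fun t => haarFn b j m l t) = fun t => ∑ k ∈ Finset.range b,
      (Set.Ico (((b*m+k : ℕ) : ℝ) / (b : ℝ) ^ (j+1)) (((b*m+k+1 : ℕ) : ℝ) / (b : ℝ) ^ (j+1))).indicator
        (fun _ => eb b (l * k)) t := by
    funext t
    rw [haarFn_eq_sum b j m l hb t]
    congr 1
    funext k
    rw [Set.indicator_apply]
    simp [Set.mem_Ico]
  rw [heq, integral_finset_sum]
  · have hcalc : ∀ k ∈ Finset.range b,
        ∫ t in Set.Ico (0:ℝ) 1,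
          (Set.Ico (((b*m+k : ℕ) : ℝ) / (b : ℝ) ^ (j+1)) (((b*m+k+1 : ℕ) : ℝ) / (b : ℝ) ^ (j+1))).indicator
            (fun _ => eb b (l * k)) t
          = (((b:ℝ) ^ (j+1))⁻¹ : ℝ) • eb b (l * k) := by
      intro k hk
      rw [setIntegral_indicator measurableSet_Ico,
        Set.inter_eq_self_of_subset_right (subinterval_subset b j m hm hb k (Finset.mem_range.1 hk)),
        setIntegral_const, measureReal_def, Real.volume_Ico]
      congr 1
      have h1 : ((b*m+k:ℕ):ℝ) ≤ ((b*m+k+1:ℕ):ℝ) := Nat.cast_le.2 (by omega)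
      rw [ENNReal.toReal_ofReal (sub_nonneg.2 (div_le_div_of_nonneg_right h1 hbR.le))]
      push_cast
      field_simp
      ring
    rw [Finset.sum_congr rfl hcalc, ← Finset.smul_sum, sum_eb_eq_zero b l hl hlb, smul_zero]
  · intro k hk
    apply (IntegrableOn.integrable _)
    apply Measure.integrableOn_of_bounded (M := 1)
    · rw [Real.volume_Ico]; exact ENNReal.ofReal_ne_top
    · exact ((measurable_const).indicator measurableSet_Ico).aestronglyMeasurable
    · apply Filter.Eventually.of_forall
      intro t
      rw [Set.indicator_apply]
      split
      · rw [abs_eb b hb]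
      · simp

lemma Ico_sub_subset (b j m : ℕ) (hm : m < b ^ j) (hb : 0 < b) :
    Set.Ico ((m:ℝ)/(b:ℝ)^j) (((m:ℝ)+1)/(b:ℝ)^j) ⊆ Set.Ico (0:ℝ) 1 := by
  have hbj : (0:ℝ) < (b:ℝ)^j := by positivity
  intro t ht
  refine ⟨le_trans (by positivity) ht.1, lt_of_lt_of_le ht.2 ?_⟩
  rw [div_le_one hbj]
  have : ((m+1:ℕ):ℝ) ≤ ((b^j:ℕ):ℝ) := Nat.cast_le.2 hm
  push_cast at this
  linarith

lemma measurable_ind_mul_haarFn (b j m l : ℕ) (z : ℝ) :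
    Measurable (fun t : ℝ => (if 0 ≤ z ∧ z < t then (1:ℂ) else 0) * haarFn b j m l t) := by
  apply Measurable.mul _ (measurable_haarFn b j m l)
  apply Measurable.ite _ measurable_const measurable_const
  by_cases hz : 0 ≤ z
  · have : {t : ℝ | 0 ≤ z ∧ z < t} = Set.Ioi z := by ext t; simp [hz]
    rw [this]; exact measurableSet_Ioi
  · have : {t : ℝ | 0 ≤ z ∧ z < t} = ∅ := by ext t; simp [hz]
    rw [this]; exact MeasurableSet.empty

lemma setIntegral_ind_haarFn (b j n' m l T : ℕ) (hm : m < b ^ j) (hl : 1 ≤ l) (hlb : l < b)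
    (hnj : n' ≤ j) (z : ℝ) (hz : z = (T:ℝ) / (b:ℝ)^n') :
    ∫ t in Set.Ico (0:ℝ) 1, (if 0 ≤ z ∧ z < t then (1:ℂ) else 0) * haarFn b j m l t = 0 := by
  have hb : 0 < b := lt_of_le_of_lt (Nat.zero_le _) hlb
  have hbj : (0:ℝ) < (b:ℝ)^j := by positivity
  have hbn : (0:ℝ) < (b:ℝ)^n' := by positivity
  set s : ℕ := T * b ^ (j - n') with hs
  have hzs : z = (s:ℝ)/(b:ℝ)^j := by
    rw [hz, hs]
    push_cast
    rw [show (b:ℝ)^j = (b:ℝ)^n' * (b:ℝ)^(j-n') by rw [← pow_add]; congr 1; omega]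
    rw [div_eq_div_iff hbn.ne' (by positivity)]
    ring
  have hz0 : 0 ≤ z := by rw [hzs]; positivity
  rcases le_or_gt s m with hcase | hcase
  · -- z ≤ m/b^j : integrand = haarFn a.e.
    have hzm : z ≤ (m:ℝ)/(b:ℝ)^j := by
      rw [hzs]
      exact div_le_div_of_nonneg_right (Nat.cast_le.2 hcase) hbj.le
    have hae : ∀ᵐ t : ℝ, t ≠ (m:ℝ)/(b:ℝ)^j := by
      rw [MeasureTheory.ae_iff]
      have : {t : ℝ | ¬ t ≠ (m:ℝ)/(b:ℝ)^j} = {(m:ℝ)/(b:ℝ)^j} := by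
        ext t; simp
      rw [this]
      exact Real.volume_singleton
    have : ∫ t in Set.Ico (0:ℝ) 1, (if 0 ≤ z ∧ z < t then (1:ℂ) else 0) * haarFn b j m l t
        = ∫ t in Set.Ico (0:ℝ) 1, haarFn b j m l t := by
      apply integral_congr_ae
      filter_upwards [ae_restrict_of_ae hae] with t ht
      by_cases hmem : (m : ℝ) / (b : ℝ) ^ j ≤ t ∧ t < ((m : ℝ) + 1) / (b : ℝ) ^ j
      · rw [if_pos ⟨hz0, lt_of_le_of_lt hzm (lt_of_le_of_ne hmem.1 (Ne.symm ht))⟩, one_mul]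
      · rw [haarFn_eq_zero_of_notin b j m l hmem, mul_zero]
    rw [this, setIntegral_haarFn b j m l hm hl hlb]
  · -- (m+1)/b^j ≤ z : integrand = 0
    have hzm : ((m:ℝ)+1)/(b:ℝ)^j ≤ z := by
      rw [hzs]
      apply div_le_div_of_nonneg_right _ hbj.le
      exact_mod_cast Nat.cast_le.2 hcase
    have : ∀ t : ℝ, (if 0 ≤ z ∧ z < t then (1:ℂ) else 0) * haarFn b j m l t = 0 := by
      intro t
      by_cases hmem : (m : ℝ) / (b : ℝ) ^ j ≤ t ∧ t < ((m : ℝ) + 1) / (b : ℝ) ^ j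
      · rw [if_neg, zero_mul]
        rintro ⟨-, hzt⟩
        exact absurd (lt_of_le_of_lt hzm hzt) (not_lt.2 hmem.2.le)
      · rw [haarFn_eq_zero_of_notin b j m l hmem, mul_zero]
    simp only [this, integral_zero]

lemma norm_setIntegral_x_haarFn (b j m l : ℕ) (hm : m < b ^ j) (hl : 1 ≤ l) (hlb : l < b) :
    ‖∫ t in Set.Ico (0:ℝ) 1, (t:ℂ) * haarFn b j m l t‖ ≤ ((b:ℝ)^j)⁻¹ * ((b:ℝ)^j)⁻¹ := by
  have hb : 0 < b := lt_of_le_of_lt (Nat.zero_le _) hlb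
  have hbj : (0:ℝ) < (b:ℝ)^j := by positivity
  set c : ℝ := (m:ℝ)/(b:ℝ)^j with hc
  set I : Set ℝ := Set.Ico c (((m:ℝ)+1)/(b:ℝ)^j) with hI
  have hIsub : I ⊆ Set.Ico (0:ℝ) 1 := Ico_sub_subset b j m hm hb
  have hint1 : IntegrableOn (fun t : ℝ => (t:ℂ) * haarFn b j m l t) (Set.Ico (0:ℝ) 1) := by
    apply Measure.integrableOn_of_bounded (M := 1)
    · rw [Real.volume_Ico]; exact ENNReal.ofReal_ne_top
    · exact ((Complex.measurable_ofReal.comp measurable_id).mul (measurable_haarFn b j m l)).aestronglyMeasurable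
    · filter_upwards [ae_restrict_mem measurableSet_Ico] with t ht
      rw [norm_mul]
      have h1 : ‖(t:ℂ)‖ ≤ 1 := by
        rw [Complex.norm_real, Real.norm_eq_abs, abs_of_nonneg ht.1]
        exact ht.2.le
      calc ‖(t:ℂ)‖ * ‖haarFn b j m l t‖ ≤ 1 * 1 :=
            mul_le_mul h1 (norm_haarFn_le b j m l hb t) (norm_nonneg _) zero_le_one
        _ = 1 := one_mul 1
  have hint2 : IntegrableOn (fun t : ℝ => (c:ℂ) * haarFn b j m l t) (Set.Ico (0:ℝ) 1) :=
    (integrableOn_haarFn b j m l hb).const_mul _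
  have hsub : ∫ t in Set.Ico (0:ℝ) 1, ((t:ℂ) - (c:ℂ)) * haarFn b j m l t
      = (∫ t in Set.Ico (0:ℝ) 1, (t:ℂ) * haarFn b j m l t)
        - ∫ t in Set.Ico (0:ℝ) 1, (c:ℂ) * haarFn b j m l t := by
    rw [← integral_sub hint1 hint2]
    apply integral_congr_ae
    filter_upwards with t
    ring
  have hsplit : ∫ t in Set.Ico (0:ℝ) 1, (t:ℂ) * haarFn b j m l t
      = (∫ t in Set.Ico (0:ℝ) 1, ((t:ℂ) - (c:ℂ)) * haarFn b j m l t)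
        + ∫ t in Set.Ico (0:ℝ) 1, (c:ℂ) * haarFn b j m l t := by
    rw [hsub]; ring
  have hzero : ∫ t in Set.Ico (0:ℝ) 1, (c:ℂ) * haarFn b j m l t = 0 := by
    rw [integral_const_mul, setIntegral_haarFn b j m l hm hl hlb, mul_zero]
  rw [hsplit, hzero, add_zero]
  have hres : ∫ t in Set.Ico (0:ℝ) 1, ((t:ℂ) - (c:ℂ)) * haarFn b j m l t
      = ∫ t in I, ((t:ℂ) - (c:ℂ)) * haarFn b j m l t := by
    have hfe : ∀ t : ℝ, ((t:ℂ) - (c:ℂ)) * haarFn b j m l t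
        = I.indicator (fun t => ((t:ℂ) - (c:ℂ)) * haarFn b j m l t) t := by
      intro t
      rw [Set.indicator_apply]
      split
      · rfl
      · rename_i hmem
        rw [haarFn_eq_zero_of_notin b j m l (by rwa [← Set.mem_Ico]), mul_zero]
    calc ∫ t in Set.Ico (0:ℝ) 1, ((t:ℂ) - (c:ℂ)) * haarFn b j m l t
        = ∫ t in Set.Ico (0:ℝ) 1,
            I.indicator (fun t => ((t:ℂ) - (c:ℂ)) * haarFn b j m l t) t := by
          apply integral_congr_ae
          filter_upwards with t using hfe t
      _ = ∫ t in Set.Ico (0:ℝ) 1 ∩ I, ((t:ℂ) - (c:ℂ)) * haarFn b j m l t :=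
          setIntegral_indicator measurableSet_Ico
      _ = ∫ t in I, ((t:ℂ) - (c:ℂ)) * haarFn b j m l t := by
          rw [Set.inter_eq_self_of_subset_right hIsub]
  rw [hres]
  have hvol : volume I = ENNReal.ofReal (((b:ℝ)^j)⁻¹) := by
    rw [hI, Real.volume_Ico]
    congr 1
    rw [hc]
    field_simp
    ring
  have hbound := norm_setIntegral_le_of_norm_le_const (μ := volume) (s := I)
    (C := ((b:ℝ)^j)⁻¹) (f := fun t : ℝ => ((t:ℂ) - (c:ℂ)) * haarFn b j m l t)
    (by rw [hvol]; exact ENNReal.ofReal_lt_top)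
    (by
      intro t ht
      rw [norm_mul]
      have h1 : ‖(t:ℂ) - (c:ℂ)‖ ≤ ((b:ℝ)^j)⁻¹ := by
        rw [← Complex.ofReal_sub, Complex.norm_real, Real.norm_eq_abs,
          abs_of_nonneg (sub_nonneg.2 ht.1)]
        have := ht.2
        rw [hI, Set.mem_Ico] at ht
        have : t - c < ((m:ℝ)+1)/(b:ℝ)^j - c := by linarith [ht.2]
        apply le_of_lt (lt_of_lt_of_le this _)
        rw [hc]
        rw [div_sub_div_same]
        rw [add_sub_cancel_left]
        rw [one_div]
      calc ‖(t:ℂ) - (c:ℂ)‖ * ‖haarFn b j m l t‖ ≤ ((b:ℝ)^j)⁻¹ * 1 :=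
            mul_le_mul h1 (norm_haarFn_le b j m l hb t) (norm_nonneg _) (by positivity)
        _ = ((b:ℝ)^j)⁻¹ := mul_one _)
  apply le_trans hbound
  rw [measureReal_def, hvol, ENNReal.toReal_ofReal (by positivity)]

lemma indicator_pi_prod (d : ℕ) (f : Fin d → ℝ → ℂ) (x : Fin d → ℝ) :
    (Set.univ.pi fun _ : Fin d => Set.Ico (0:ℝ) 1).indicator (fun y => ∏ i, f i (y i)) x
      = ∏ i, (Set.Ico (0:ℝ) 1).indicator (f i) (x i) := by
  by_cases hx : x ∈ Set.univ.pi fun _ : Fin d => Set.Ico (0:ℝ) 1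
  · rw [Set.indicator_of_mem hx]
    exact Finset.prod_congr rfl fun i _ =>
      (Set.indicator_of_mem (hx i (Set.mem_univ i)) (f i)).symm
  · rw [Set.indicator_of_notMem hx]
    rw [Set.mem_pi] at hx
    push_neg at hx
    obtain ⟨i, _, hi⟩ := hx
    exact (Finset.prod_eq_zero (Finset.mem_univ i) (Set.indicator_of_notMem hi (f i))).symm

lemma setIntegral_pi_prod {d : ℕ} (f : Fin d → ℝ → ℂ) :
    ∫ x in Set.univ.pi (fun _ : Fin d => Set.Ico (0:ℝ) 1), ∏ i, f i (x i)
      = ∏ i, ∫ t in Set.Ico (0:ℝ) 1, f i t := by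
  rw [← integral_indicator (MeasurableSet.univ_pi fun _ => measurableSet_Ico)]
  rw [show ((Set.univ.pi fun _ : Fin d => Set.Ico (0:ℝ) 1).indicator fun y => ∏ i, f i (y i))
      = fun x => ∏ i, (Set.Ico (0:ℝ) 1).indicator (f i) (x i) from funext (indicator_pi_prod d f)]
  rw [MeasureTheory.volume_pi, MeasureTheory.integral_fintype_prod_eq_prod (ι := Fin d)
    (fun i => (Set.Ico (0:ℝ) 1).indicator (f i))]
  exact Finset.prod_congr rfl fun i _ => integral_indicator measurableSet_Ico

lemma integrableOn_pi_prod {d : ℕ} (f : Fin d → ℝ → ℂ) (hf : ∀ i, Measurable (f i))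
    (hbd : ∀ i, ∀ t ∈ Set.Ico (0:ℝ) 1, ‖f i t‖ ≤ 1) :
    IntegrableOn (fun x : Fin d → ℝ => ∏ i, f i (x i))
      (Set.univ.pi fun _ : Fin d => Set.Ico (0:ℝ) 1) := by
  rw [← integrable_indicator_iff (MeasurableSet.univ_pi fun _ => measurableSet_Ico)]
  rw [show ((Set.univ.pi fun _ : Fin d => Set.Ico (0:ℝ) 1).indicator fun y => ∏ i, f i (y i))
      = fun x => ∏ i, (Set.Ico (0:ℝ) 1).indicator (f i) (x i) from funext (indicator_pi_prod d f)]
  apply MeasureTheory.Integrable.fintype_prod (f := fun i => (Set.Ico (0:ℝ) 1).indicator (f i))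
  intro i
  apply IntegrableOn.integrable_indicator _ measurableSet_Ico
  apply Measure.integrableOn_of_bounded (M := 1)
  · rw [Real.volume_Ico]; exact ENNReal.ofReal_ne_top
  · exact (hf i).aestronglyMeasurable
  · filter_upwards [ae_restrict_mem measurableSet_Ico] with t ht using hbd i t ht

lemma ite_forall_prod {d : ℕ} (Q : Fin d → Prop) [∀ i, Decidable (Q i)]
    [Decidable (∀ i, Q i)] :
    (if (∀ i, Q i) then (1:ℂ) else 0) = ∏ i, if Q i then (1:ℂ) else 0 := by
  by_cases h : ∀ i, Q i
  · rw [if_pos h]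
    exact (Finset.prod_eq_one fun i _ => if_pos (h i)).symm
  · rw [if_neg h]
    push_neg at h
    obtain ⟨i, hi⟩ := h
    exact (Finset.prod_eq_zero (Finset.mem_univ i) (by rw [if_neg hi] : (if Q i then (1:ℂ) else 0) = 0)).symm

lemma measurable_ind_z (z : ℝ) :
    Measurable (fun t : ℝ => (if 0 ≤ z ∧ z < t then (1:ℂ) else 0)) := by
  apply Measurable.ite _ measurable_const measurable_const
  by_cases hz : 0 ≤ z
  · have : {t : ℝ | 0 ≤ z ∧ z < t} = Set.Ioi z := by ext t; simp [hz]
    rw [this]; exact measurableSet_Ioi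
  · have : {t : ℝ | 0 ≤ z ∧ z < t} = ∅ := by ext t; simp [hz]
    rw [this]; exact MeasurableSet.empty

lemma measurable_haarFnZ (b : ℕ) (j : ℤ) (m l : ℕ) : Measurable (haarFnZ b j m l) := by
  rcases eq_or_ne j (-1) with h | h
  · have he : haarFnZ b j m l = fun x => if 0 ≤ x ∧ x < 1 then (1:ℂ) else 0 := by
      funext x; unfold haarFnZ; rw [if_pos h]
    rw [he]
    exact Measurable.ite (measurableSet_Ico (a := (0:ℝ)) (b := 1)) measurable_const
      measurable_const
  · have he : haarFnZ b j m l = haarFn b j.toNat m l := by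
      funext x; unfold haarFnZ; rw [if_neg h]
    rw [he]
    exact measurable_haarFn b j.toNat m l

lemma norm_haarFnZ_le (b : ℕ) (j : ℤ) (m l : ℕ) (hb : 0 < b) (t : ℝ) :
    ‖haarFnZ b j m l t‖ ≤ 1 := by
  rcases eq_or_ne j (-1) with h | h
  · have he : haarFnZ b j m l t = if 0 ≤ t ∧ t < 1 then (1:ℂ) else 0 := by
      unfold haarFnZ; rw [if_pos h]
    rw [he]
    split <;> simp
  · have he : haarFnZ b j m l t = haarFn b j.toNat m l t := by
      unfold haarFnZ; rw [if_neg h]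
    rw [he]
    exact norm_haarFn_le b j.toNat m l hb t

lemma PhiMap_eq_nat_div (b : ℕ) (hb : 0 < b) {n : ℕ} (a : Fin n → ZMod b) :
    PhiMap b a = ((∑ k : Fin n, (a k).val * b ^ (n - 1 - (k:ℕ)) : ℕ) : ℝ) / (b:ℝ) ^ n := by
  unfold PhiMap
  push_cast
  rw [Finset.sum_div]
  apply Finset.sum_congr rfl
  intro k _
  have hk : (k:ℕ) < n := k.2
  rw [show (b:ℝ)^n = (b:ℝ)^(n - 1 - (k:ℕ)) * (b:ℝ)^((k:ℕ)+1) by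
    rw [← pow_add]; congr 1; omega]
  have hb1 : ((b:ℝ)^(n - 1 - (k:ℕ))) ≠ 0 := by positivity
  have hb2 : ((b:ℝ)^((k:ℕ)+1)) ≠ 0 := by positivity
  field_simp

/-- Haar coefficients of the discrepancy function of the Chen–Skriganov
point sets for `j ≠ (−1,…,−1)` with `j_i ≥ n` for at least one `i`:
`|μ_{jml}| ≤ c b^{−2|j|}`. -/
theorem statement18 (b d : ℕ) (hd : 1 ≤ d) (hb : b.Prime) (hbd : 2 * d ^ 2 ≤ b)
    (β : Fin d → ℕ → ZMod b)
    (hβ : ∀ i₁ ν₁ i₂ ν₂, ν₁ < 2 * d → ν₂ < 2 * d → β i₁ ν₁ = β i₂ ν₂ →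
      i₁ = i₂ ∧ ν₁ = ν₂) :
    ∃ c > (0 : ℝ), ∀ w : ℕ, 1 ≤ w →
      ∀ j : Fin d → ℤ, (∀ i, -1 ≤ j i) → j ≠ (fun _ => -1) →
        (∃ i, j i ≠ -1 ∧ (2 * d * w : ℤ) ≤ j i) →
        ∀ m : Fin d → ℕ,
          (∀ i, (j i = -1 → m i = 0) ∧ (j i ≠ -1 → m i < b ^ (j i).toNat)) →
        ∀ l : Fin d → ℕ,
          (∀ i, (j i = -1 → l i = 1) ∧ (j i ≠ -1 → 1 ≤ l i ∧ l i < b)) →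
        ‖haarCoeff b d j m l (fun x => (csDisc b d w β x : ℂ))‖
          ≤ c * ((b : ℝ) ^ (2 * (∑ i, (j i).toNat)))⁻¹ := by
  classical
  refine ⟨1, one_pos, ?_⟩
  intro w hw j hjge hjne hjbig m hm l hl
  have hb2 : 2 ≤ b := hb.two_le
  have hb0 : 0 < b := by omega
  haveI : NeZero b := ⟨by omega⟩
  set G : (Fin d → Fin (2*d*w) → ZMod b) → Fin d → ℝ → ℂ :=
    fun A i t => (if 0 ≤ PhiMap b (A i) ∧ PhiMap b (A i) < t then (1:ℂ) else 0)
      * haarFnZ b (j i) (m i) (l i) t with hG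
  set X : Fin d → ℝ → ℂ := fun i t => (t:ℂ) * haarFnZ b (j i) (m i) (l i) t with hX
  set F : Finset (Fin d → Fin (2*d*w) → ZMod b) :=
    Finset.univ.filter (fun A => A ∈ csCode b d w β) with hF
  -- counting identity
  have hcount : ∀ x : Fin d → ℝ,
      ((Nat.card {A : Fin d → Fin (2*d*w) → ZMod b //
        A ∈ csCode b d w β ∧ ∀ i, PhiMap b (A i) ∈ Set.Ico (0:ℝ) (x i)} : ℕ) : ℂ)
      = ∑ A ∈ F, ∏ i, (if 0 ≤ PhiMap b (A i) ∧ PhiMap b (A i) < x i then (1:ℂ) else 0) := by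
    intro x
    rw [Nat.card_eq_fintype_card, Fintype.card_subtype, Finset.card_filter]
    push_cast
    rw [hF, Finset.sum_filter]
    apply Finset.sum_congr rfl
    intro A _
    by_cases hA : A ∈ csCode b d w β
    · simp only [hA, true_and, if_true]
      rw [ite_forall_prod (fun i => PhiMap b (A i) ∈ Set.Ico (0:ℝ) (x i))]
      apply Finset.prod_congr rfl
      intro i _
      simp only [Set.mem_Ico]
    · simp only [hA, false_and, if_false]
  -- pointwise identity
  have hpt : ∀ x : Fin d → ℝ,
      ((csDisc b d w β x : ℝ) : ℂ) * ∏ i, haarFnZ b (j i) (m i) (l i) (x i)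
      = (∑ A ∈ F, ∏ i, G A i (x i)) / ((b:ℂ) ^ (2*d*w)) - ∏ i, X i (x i) := by
    intro x
    unfold csDisc
    push_cast
    rw [hcount x, sub_mul, div_mul_eq_mul_div, Finset.sum_mul]
    congr 1
    · congr 1
      apply Finset.sum_congr rfl
      intro A _
      rw [← Finset.prod_mul_distrib]
    · rw [← Finset.prod_mul_distrib]
  -- integrability
  have hGmeas : ∀ A i, Measurable (G A i) := by
    intro A i
    rw [hG]
    exact (measurable_ind_z _).mul (measurable_haarFnZ b (j i) (m i) (l i))
  have hGbd : ∀ A i, ∀ t ∈ Set.Ico (0:ℝ) 1, ‖G A i t‖ ≤ 1 := by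
    intro A i t _
    rw [hG]
    simp only
    rw [norm_mul]
    apply mul_le_one₀ _ (norm_nonneg _) (norm_haarFnZ_le b (j i) (m i) (l i) hb0 t)
    split <;> simp
  have hXmeas : ∀ i, Measurable (X i) := by
    intro i
    rw [hX]
    exact (Complex.measurable_ofReal.comp measurable_id).mul
      (measurable_haarFnZ b (j i) (m i) (l i))
  have hXbd : ∀ i, ∀ t ∈ Set.Ico (0:ℝ) 1, ‖X i t‖ ≤ 1 := by
    intro i t ht
    rw [hX]
    simp only
    rw [norm_mul]
    apply mul_le_one₀ _ (norm_nonneg _) (norm_haarFnZ_le b (j i) (m i) (l i) hb0 t)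
    rw [Complex.norm_real, Real.norm_eq_abs, abs_of_nonneg ht.1]
    exact ht.2.le
  have hGint : ∀ A, IntegrableOn (fun x : Fin d → ℝ => ∏ i, G A i (x i))
      (Set.univ.pi fun _ : Fin d => Set.Ico (0:ℝ) 1) :=
    fun A => integrableOn_pi_prod (G A) (hGmeas A) (hGbd A)
  have hXint : IntegrableOn (fun x : Fin d → ℝ => ∏ i, X i (x i))
      (Set.univ.pi fun _ : Fin d => Set.Ico (0:ℝ) 1) :=
    integrableOn_pi_prod X hXmeas hXbd
  -- split the Haar coefficient
  have hsplit : haarCoeff b d j m l (fun x => ((csDisc b d w β x : ℝ) : ℂ))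
      = (∑ A ∈ F, ∫ x in Set.univ.pi (fun _ : Fin d => Set.Ico (0:ℝ) 1),
          ∏ i, G A i (x i)) / ((b:ℂ) ^ (2*d*w))
        - ∫ x in Set.univ.pi (fun _ : Fin d => Set.Ico (0:ℝ) 1), ∏ i, X i (x i) := by
    unfold haarCoeff
    rw [show (∫ x in Set.univ.pi (fun _ : Fin d => Set.Ico (0 : ℝ) 1),
        ((csDisc b d w β x : ℝ) : ℂ) * ∏ i, haarFnZ b (j i) (m i) (l i) (x i))
        = ∫ x in Set.univ.pi (fun _ : Fin d => Set.Ico (0 : ℝ) 1),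
          ((∑ A ∈ F, ∏ i, G A i (x i)) / ((b:ℂ) ^ (2*d*w)) - ∏ i, X i (x i))
      from integral_congr_ae (Filter.Eventually.of_forall fun x => hpt x)]
    rw [integral_sub ((integrable_finset_sum F (fun A _ => hGint A)).div_const _) hXint]
    rw [integral_div, integral_finset_sum F (fun A _ => hGint A)]
  -- counting part vanishes
  obtain ⟨i₀, hi₀ne, hi₀ge⟩ := hjbig
  have hkey : ((2*d*w : ℕ) : ℤ) ≤ j i₀ := by push_cast; exact_mod_cast hi₀ge
  have hnJ : 2*d*w ≤ (j i₀).toNat := by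
    have h := Int.toNat_le_toNat hkey
    rwa [Int.toNat_natCast] at h
  have hGzero : ∀ A, (∫ x in Set.univ.pi (fun _ : Fin d => Set.Ico (0:ℝ) 1),
      ∏ i, G A i (x i)) = 0 := by
    intro A
    rw [setIntegral_pi_prod (G A)]
    apply Finset.prod_eq_zero (Finset.mem_univ i₀)
    have hmJ : m i₀ < b ^ (j i₀).toNat := (hm i₀).2 hi₀ne
    have hlJ := (hl i₀).2 hi₀ne
    have he : G A i₀ = fun t =>
        (if 0 ≤ PhiMap b (A i₀) ∧ PhiMap b (A i₀) < t then (1:ℂ) else 0)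
          * haarFn b (j i₀).toNat (m i₀) (l i₀) t := by
      funext t
      rw [hG]
      simp only
      congr 1
      unfold haarFnZ
      rw [if_neg hi₀ne]
    rw [he]
    exact setIntegral_ind_haarFn b (j i₀).toNat (2*d*w) (m i₀) (l i₀) _ hmJ hlJ.1 hlJ.2
      hnJ (PhiMap b (A i₀)) (PhiMap_eq_nat_div b hb0 (A i₀))
  -- bound the main part
  have hXbound : ∀ i, ‖∫ t in Set.Ico (0:ℝ) 1, X i t‖ ≤ ((b:ℝ) ^ (2 * (j i).toNat))⁻¹ := by
    intro i
    rcases eq_or_ne (j i) (-1) with hji | hji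
    · have he : X i = fun t : ℝ => (t:ℂ) * (if 0 ≤ t ∧ t < 1 then (1:ℂ) else 0) := by
        funext t
        rw [hX]
        simp only
        congr 1
        unfold haarFnZ
        rw [if_pos hji]
      rw [he, hji, show ((-1:ℤ)).toNat = 0 from rfl]
      simp only [mul_zero, pow_zero, inv_one]
      calc ‖∫ t in Set.Ico (0:ℝ) 1, (t:ℂ) * (if 0 ≤ t ∧ t < 1 then (1:ℂ) else 0)‖
          ≤ 1 * (volume (Set.Ico (0:ℝ) 1)).toReal := by
            apply norm_setIntegral_le_of_norm_le_const
            · rw [Real.volume_Ico]; exact ENNReal.ofReal_lt_top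
            · intro t ht
              rw [norm_mul]
              apply mul_le_one₀ _ (norm_nonneg _)
              · split <;> simp
              · rw [Complex.norm_real, Real.norm_eq_abs, abs_of_nonneg ht.1]
                exact ht.2.le
        _ = 1 := by rw [Real.volume_Ico]; norm_num
    · have he : X i = fun t : ℝ => (t:ℂ) * haarFn b (j i).toNat (m i) (l i) t := by
        funext t
        rw [hX]
        simp only
        congr 1
        unfold haarFnZ
        rw [if_neg hji]
      rw [he]
      have := norm_setIntegral_x_haarFn b (j i).toNat (m i) (l i)
        ((hm i).2 hji) ((hl i).2 hji).1 ((hl i).2 hji).2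
      calc ‖∫ t in Set.Ico (0:ℝ) 1, (t:ℂ) * haarFn b (j i).toNat (m i) (l i) t‖
          ≤ ((b:ℝ)^(j i).toNat)⁻¹ * ((b:ℝ)^(j i).toNat)⁻¹ := this
        _ = ((b:ℝ) ^ (2 * (j i).toNat))⁻¹ := by
            rw [two_mul, pow_add, mul_inv]
  -- conclude
  rw [hsplit, Finset.sum_eq_zero (fun A _ => hGzero A),
    zero_div, zero_sub, norm_neg, setIntegral_pi_prod X, norm_prod, one_mul]
  calc ∏ i, ‖∫ t in Set.Ico (0:ℝ) 1, X i t‖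
      ≤ ∏ i, ((b:ℝ) ^ (2 * (j i).toNat))⁻¹ :=
        Finset.prod_le_prod (fun i _ => norm_nonneg _) (fun i _ => hXbound i)
    _ = (∏ i, (b:ℝ) ^ (2 * (j i).toNat))⁻¹ := by
        rw [Finset.prod_inv_distrib]
    _ = ((b : ℝ) ^ (2 * (∑ i, (j i).toNat)))⁻¹ := by
        congr 1
        rw [Finset.prod_pow_eq_pow_sum, ← Finset.mul_sum]
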